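/- arXiv:2001.07203 — 3 statements merged into one kernel-verified Lean document; each statement's English description precedes it below -/
import Mathlib

section
/- The gradient of the policy-conditioned free energy F_π with respect to the sufficient statistics s_{πτ} (for 1 < τ ≤ t) equals 1 + log s_{πτ} - (o_τ · log A + s_{π,τ+1} · log B_{π_τ} + log(B_{π_{τ-1}}) s_{π,τ-1}), i.e., the stated prediction-error expression. -/
open BigOperators Finset

/-- The partial derivative (gradient component) of the policy-conditioned free energy
`F_π(s_{π1},…,s_{πT}) = ∑_{τ=1}^T s_{πτ}·log s_{πτ} - ∑_{τ=1}^t o_τ·(log A) s_{πτ}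
  - s_{π1}·log D - ∑_{τ=2}^T s_{πτ}·(log B_{π_{τ-1}}) s_{π,τ-1}`
with respect to the `i`-th component of `s_{πτ}`, for `1 < τ ≤ t` (and `τ < T`), equals
`1 + log s_{πτ,i} - (o_τ·log A + s_{π,τ+1}·log B_{π_τ} + (log B_{π_{τ-1}}) s_{π,τ-1})_i`.
Here `B k` denotes the transition matrix `B_{π_{k-1}}` used between steps `k-1` and `k`. -/
theorem free_energy_gradient_perception
    (m n T t τ : ℕ) (hτ1 : 1 < τ) (hτt : τ ≤ t) (hτT : τ < T) (htT : t ≤ T)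
    (sv : ℕ → Fin m → ℝ) (o : ℕ → Fin n → ℝ)
    (A : Fin n → Fin m → ℝ) (B : ℕ → Fin m → Fin m → ℝ) (D : Fin m → ℝ)
    (hs : ∀ k i, 0 < sv k i) (hA : ∀ j i, 0 < A j i)
    (hB : ∀ k i i', 0 < B k i i') (hD : ∀ i, 0 < D i)
    (i : Fin m) :
    HasDerivAt
      (fun y : ℝ =>
        (fun w : ℕ → Fin m → ℝ =>
          (∑ k ∈ Finset.Icc 1 T, ∑ j, w k j * Real.log (w k j))
          - (∑ k ∈ Finset.Icc 1 t, ∑ jo, o k jo * ∑ j, Real.log (A jo j) * w k j)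
          - (∑ j, w 1 j * Real.log (D j))
          - (∑ k ∈ Finset.Icc 2 T, ∑ j, ∑ j',
              w k j * Real.log (B k j j') * w (k - 1) j'))
        (Function.update sv τ (Function.update (sv τ) i y)))
      (1 + Real.log (sv τ i)
        - ((∑ jo, o τ jo * Real.log (A jo i))
          + (∑ j', sv (τ + 1) j' * Real.log (B (τ + 1) j' i))
          + (∑ j', Real.log (B τ i j') * sv (τ - 1) j')))
      (sv τ i) := by
  classical
  have hx0 : sv τ i ≠ 0 := ne_of_gt (hs τ i)
  have h1τ : ¬ ((1:ℕ) = τ) := by omega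
  have hτm1 : ¬ (τ - 1 = τ) := by omega
  have hττ1 : ¬ (τ + 1 = τ) := by omega
  have hτmemT : τ ∈ Finset.Icc 1 T := Finset.mem_Icc.2 ⟨le_of_lt hτ1, le_of_lt hτT⟩
  have hτmemt : τ ∈ Finset.Icc 1 t := Finset.mem_Icc.2 ⟨le_of_lt hτ1, hτt⟩
  have hτmem2 : τ ∈ Finset.Icc 2 T := Finset.mem_Icc.2 ⟨hτ1, le_of_lt hτT⟩
  have hτ1mem2 : τ + 1 ∈ Finset.Icc 2 T := Finset.mem_Icc.2 ⟨by omega, hτT⟩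
  have key : ∀ (y : ℝ) (k : ℕ) (j : Fin m),
      Function.update sv τ (Function.update (sv τ) i y) k j
      = if k = τ then (if j = i then y else sv τ j) else sv k j := by
    intro y k j
    by_cases hk : k = τ <;> simp [Function.update_apply, hk]
  simp only [key, if_neg h1τ]
  -- S1
  have h1 : HasDerivAt (fun y : ℝ => ∑ k ∈ Finset.Icc 1 T, ∑ j,
      (if k = τ then (if j = i then y else sv τ j) else sv k j) *
        Real.log (if k = τ then (if j = i then y else sv τ j) else sv k j))
      (1 + Real.log (sv τ i)) (sv τ i) := by
    have hterm : ∀ k ∈ Finset.Icc 1 T, HasDerivAt (fun y : ℝ => ∑ j,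
        (if k = τ then (if j = i then y else sv τ j) else sv k j) *
          Real.log (if k = τ then (if j = i then y else sv τ j) else sv k j))
        (if k = τ then 1 + Real.log (sv τ i) else 0) (sv τ i) := by
      intro k _
      by_cases hk : k = τ
      · subst hk
        simp only [if_pos rfl]
        have hj : ∀ j : Fin m, j ∈ (Finset.univ : Finset (Fin m)) → HasDerivAt (fun y : ℝ =>
            (if j = i then y else sv k j) * Real.log (if j = i then y else sv k j))
            (if j = i then 1 + Real.log (sv k i) else 0) (sv k i) := by
          intro j _
          by_cases hji : j = i
          · simp only [if_pos hji]
            have := (hasDerivAt_id (sv k i)).mul (Real.hasDerivAt_log hx0)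
            refine this.congr_deriv ?_
            simp [mul_inv_cancel₀ hx0, add_comm]
          · simp only [if_neg hji]
            exact hasDerivAt_const _ _
        have := HasDerivAt.fun_sum hj
        refine this.congr_deriv ?_
        simp [Finset.sum_ite_eq']
      · simp only [if_neg hk]
        exact hasDerivAt_const _ _
    have := HasDerivAt.fun_sum hterm
    refine this.congr_deriv ?_
    simp [Finset.sum_ite_eq', hτmemT]
  -- S2
  have h2 : HasDerivAt (fun y : ℝ => ∑ k ∈ Finset.Icc 1 t, ∑ jo, o k jo *
      ∑ j, Real.log (A jo j) * (if k = τ then (if j = i then y else sv τ j) else sv k j))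
      (∑ jo, o τ jo * Real.log (A jo i)) (sv τ i) := by
    have hterm : ∀ k ∈ Finset.Icc 1 t, HasDerivAt (fun y : ℝ => ∑ jo, o k jo *
        ∑ j, Real.log (A jo j) * (if k = τ then (if j = i then y else sv τ j) else sv k j))
        (if k = τ then ∑ jo, o τ jo * Real.log (A jo i) else 0) (sv τ i) := by
      intro k _
      by_cases hk : k = τ
      · subst hk
        simp only [if_pos rfl]
        have hjo : ∀ jo : Fin n, jo ∈ (Finset.univ : Finset (Fin n)) → HasDerivAt (fun y : ℝ =>
            o k jo * ∑ j, Real.log (A jo j) * (if j = i then y else sv k j))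
            (o k jo * Real.log (A jo i)) (sv k i) := by
          intro jo _
          have hin : ∀ j : Fin m, j ∈ (Finset.univ : Finset (Fin m)) → HasDerivAt (fun y : ℝ =>
              Real.log (A jo j) * (if j = i then y else sv k j))
              (if j = i then Real.log (A jo i) else 0) (sv k i) := by
            intro j _
            by_cases hji : j = i
            · simp only [if_pos hji, hji]
              simpa using (hasDerivAt_id (sv k i)).const_mul (Real.log (A jo i))
            · simp only [if_neg hji]
              exact hasDerivAt_const _ _
          have := (HasDerivAt.fun_sum hin).const_mul (o k jo)
          refine this.congr_deriv ?_
          simp [Finset.sum_ite_eq']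
        exact HasDerivAt.fun_sum hjo
      · simp only [if_neg hk]
        exact hasDerivAt_const _ _
    have := HasDerivAt.fun_sum hterm
    refine this.congr_deriv ?_
    simp [Finset.sum_ite_eq', hτmemt]
  -- S3 is constant
  have h3 : HasDerivAt (fun _ : ℝ => ∑ j, sv 1 j * Real.log (D j))
      0 (sv τ i) := hasDerivAt_const _ _
  -- S4
  have h4 : HasDerivAt (fun y : ℝ => ∑ k ∈ Finset.Icc 2 T, ∑ j, ∑ j',
      (if k = τ then (if j = i then y else sv τ j) else sv k j) * Real.log (B k j j') *
      (if k - 1 = τ then (if j' = i then y else sv τ j') else sv (k - 1) j'))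
      ((∑ j', Real.log (B τ i j') * sv (τ - 1) j')
        + (∑ j', sv (τ + 1) j' * Real.log (B (τ + 1) j' i))) (sv τ i) := by
    have hterm : ∀ k ∈ Finset.Icc 2 T, HasDerivAt (fun y : ℝ => ∑ j, ∑ j',
        (if k = τ then (if j = i then y else sv τ j) else sv k j) * Real.log (B k j j') *
        (if k - 1 = τ then (if j' = i then y else sv τ j') else sv (k - 1) j'))
        ((if k = τ then ∑ j', Real.log (B τ i j') * sv (τ - 1) j' else 0)
          + (if k = τ + 1 then ∑ j', sv (τ + 1) j' * Real.log (B (τ + 1) j' i) else 0))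
        (sv τ i) := by
      intro k _
      by_cases hk : k = τ
      · subst hk
        have hkm : ¬ (k - 1 = k) := by omega
        have hkk1 : ¬ (k = k + 1) := by omega
        simp only [if_pos rfl, if_neg hkm, if_neg hkk1, add_zero]
        have hj : ∀ j : Fin m, j ∈ (Finset.univ : Finset (Fin m)) → HasDerivAt (fun y : ℝ =>
            ∑ j', (if j = i then y else sv k j) * Real.log (B k j j') * sv (k - 1) j')
            (if j = i then ∑ j', Real.log (B k i j') * sv (k - 1) j' else 0) (sv k i) := by
          intro j _
          by_cases hji : j = i
          · simp only [if_pos hji, hji]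
            have hj' : ∀ j' : Fin m, j' ∈ (Finset.univ : Finset (Fin m)) → HasDerivAt
                (fun y : ℝ => y * Real.log (B k i j') * sv (k - 1) j')
                (Real.log (B k i j') * sv (k - 1) j') (sv k i) := by
              intro j' _
              simpa using ((hasDerivAt_id (sv k i)).mul_const
                (Real.log (B k i j'))).mul_const (sv (k - 1) j')
            exact HasDerivAt.fun_sum hj'
          · simp only [if_neg hji]
            exact hasDerivAt_const _ _
        have := HasDerivAt.fun_sum hj
        refine this.congr_deriv ?_
        simp [Finset.sum_ite_eq']
      · by_cases hk1 : k = τ + 1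
        · subst hk1
          simp only [if_neg hττ1, if_pos rfl, Nat.add_sub_cancel, zero_add,
            if_neg (show ¬ (τ + 1 = τ) from hττ1)]
          have hj : ∀ j : Fin m, j ∈ (Finset.univ : Finset (Fin m)) → HasDerivAt (fun y : ℝ =>
              ∑ j', sv (τ + 1) j * Real.log (B (τ + 1) j j') * (if j' = i then y else sv τ j'))
              (sv (τ + 1) j * Real.log (B (τ + 1) j i)) (sv τ i) := by
            intro j _
            have hj' : ∀ j' : Fin m, j' ∈ (Finset.univ : Finset (Fin m)) → HasDerivAt
                (fun y : ℝ => sv (τ + 1) j * Real.log (B (τ + 1) j j') * (if j' = i then y else sv τ j'))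
                (if j' = i then sv (τ + 1) j * Real.log (B (τ + 1) j i) else 0) (sv τ i) := by
              intro j' _
              by_cases hji : j' = i
              · simp only [if_pos hji, hji]
                simpa using (hasDerivAt_id (sv τ i)).const_mul
                  (sv (τ + 1) j * Real.log (B (τ + 1) j i))
              · simp only [if_neg hji]
                exact hasDerivAt_const _ _
            have := HasDerivAt.fun_sum hj'
            refine this.congr_deriv ?_
            simp [Finset.sum_ite_eq']
          exact HasDerivAt.fun_sum hj
        · have hkm : ¬ (k - 1 = τ) := by omega
          simp only [if_neg hk, if_neg hkm, if_neg hk1, add_zero]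
          exact hasDerivAt_const _ _
    have := HasDerivAt.fun_sum hterm
    refine this.congr_deriv ?_
    rw [Finset.sum_add_distrib]
    simp [Finset.sum_ite_eq', hτmem2, hτ1mem2]
  have H := ((h1.sub h2).sub h3).sub h4
  refine H.congr_deriv ?_
  ring
end

section
/- The expected free energy G(π) = D_KL[Q(s_τ|π)||P(s_τ)] + E_{Q(s_τ|π)}[H[P(o_τ|s_τ)]] (risk plus ambiguity) equals E_Q[D_KL[Q(s_τ|o_τ,π)||P(s_τ|o_τ)]] - E_Q[log P(o_τ)] - E_Q[D_KL[Q(s_τ|o_τ,π)||Q(s_τ|π)]] (expected evidence bound minus expected log evidence minus expected information gain). -/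
open BigOperators Finset

/-- The expected free energy `G(π)` written as risk plus ambiguity equals the expected
evidence bound minus expected log evidence minus expected information gain:
`D_KL[Q(s|π)‖P(s)] + E_{Q(s|π)}[H[P(o|s)]]
 = E_Q[D_KL[Q(s|o,π)‖P(s|o)]] - E_Q[log P(o)] - E_Q[D_KL[Q(s|o,π)‖Q(s|π)]]`,
where `Q(o,s|π) = P(o|s)Q(s|π)`, `P(o) = ∑_s P(o|s)P(s)`, `P(s|o) = P(o|s)P(s)/P(o)`,
`Q(o|π) = ∑_s P(o|s)Q(s|π)` and `Q(s|o,π) = P(o|s)Q(s|π)/Q(o|π)`. -/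
theorem expected_free_energy_decomposition
    {S O : Type*} [Fintype S] [Fintype O]
    (Plik : S → O → ℝ) (Pprior : S → ℝ) (Qs : S → ℝ)
    (hlik : ∀ s o, 0 < Plik s o) (hprior : ∀ s, 0 < Pprior s) (hQs : ∀ s, 0 < Qs s)
    (hlik1 : ∀ s, ∑ o, Plik s o = 1) (hprior1 : ∑ s, Pprior s = 1) (hQs1 : ∑ s, Qs s = 1) :
    -- Risk + Ambiguity
    (∑ s, Qs s * Real.log (Qs s / Pprior s))
      + (∑ s, Qs s * (-∑ o, Plik s o * Real.log (Plik s o)))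
    =
    -- Expected evidence bound
    (∑ o, (∑ s, Plik s o * Qs s) *
        ∑ s, (Plik s o * Qs s / (∑ s', Plik s' o * Qs s')) *
          Real.log ((Plik s o * Qs s / (∑ s', Plik s' o * Qs s')) /
            (Plik s o * Pprior s / (∑ s', Plik s' o * Pprior s'))))
    -- minus Expected log evidence
    - (∑ o, (∑ s, Plik s o * Qs s) * Real.log (∑ s', Plik s' o * Pprior s'))
    -- minus Expected information gain
    - (∑ o, (∑ s, Plik s o * Qs s) *
        ∑ s, (Plik s o * Qs s / (∑ s', Plik s' o * Qs s')) *
          Real.log ((Plik s o * Qs s / (∑ s', Plik s' o * Qs s')) / Qs s)) := by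
  have hS : (Finset.univ : Finset S).Nonempty := by
    by_contra h
    rw [Finset.not_nonempty_iff_eq_empty] at h
    rw [h, Finset.sum_empty] at hQs1
    norm_num at hQs1
  have hQo : ∀ o : O, 0 < ∑ s', Plik s' o * Qs s' :=
    fun o => Finset.sum_pos (fun s _ => mul_pos (hlik s o) (hQs s)) hS
  have hPo : ∀ o : O, 0 < ∑ s', Plik s' o * Pprior s' :=
    fun o => Finset.sum_pos (fun s _ => mul_pos (hlik s o) (hprior s)) hS
  have lhs_eq :
      (∑ s, Qs s * Real.log (Qs s / Pprior s))
        + (∑ s, Qs s * (-∑ o, Plik s o * Real.log (Plik s o)))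
      = ∑ s, ∑ o, Plik s o * Qs s *
          (Real.log (Qs s) - Real.log (Plik s o) - Real.log (Pprior s)) := by
    rw [← Finset.sum_add_distrib]
    refine Finset.sum_congr rfl fun s _ => ?_
    have h1 : ∀ o : O, Plik s o * Qs s *
        (Real.log (Qs s) - Real.log (Plik s o) - Real.log (Pprior s))
        = Plik s o * (Qs s * (Real.log (Qs s) - Real.log (Pprior s)))
          - Qs s * (Plik s o * Real.log (Plik s o)) := fun o => by ring
    rw [Finset.sum_congr rfl fun o _ => h1 o, Finset.sum_sub_distrib,
      ← Finset.sum_mul, hlik1 s, ← Finset.mul_sum,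
      Real.log_div (hQs s).ne' (hprior s).ne']
    ring
  have key : ∀ (o : O) (s : S),
      Plik s o * Qs s * Real.log ((Plik s o * Qs s / (∑ s', Plik s' o * Qs s')) /
            (Plik s o * Pprior s / (∑ s', Plik s' o * Pprior s')))
        - Plik s o * Qs s * Real.log (∑ s', Plik s' o * Pprior s')
        - Plik s o * Qs s * Real.log ((Plik s o * Qs s / (∑ s', Plik s' o * Qs s')) / Qs s)
      = Plik s o * Qs s *
          (Real.log (Qs s) - Real.log (Plik s o) - Real.log (Pprior s)) := by
    intro o s
    have hq : Plik s o * Qs s ≠ 0 := (mul_pos (hlik s o) (hQs s)).ne'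
    have hp : Plik s o * Pprior s ≠ 0 := (mul_pos (hlik s o) (hprior s)).ne'
    rw [Real.log_div (div_ne_zero hq (hQo o).ne') (div_ne_zero hp (hPo o).ne'),
      Real.log_div (div_ne_zero hq (hQo o).ne') (hQs s).ne',
      Real.log_div hq (hQo o).ne', Real.log_div hp (hPo o).ne',
      Real.log_mul (hlik s o).ne' (hQs s).ne',
      Real.log_mul (hlik s o).ne' (hprior s).ne']
    ring
  have rhs_eq :
      (∑ o, (∑ s, Plik s o * Qs s) *
        ∑ s, (Plik s o * Qs s / (∑ s', Plik s' o * Qs s')) *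
          Real.log ((Plik s o * Qs s / (∑ s', Plik s' o * Qs s')) /
            (Plik s o * Pprior s / (∑ s', Plik s' o * Pprior s'))))
      - (∑ o, (∑ s, Plik s o * Qs s) * Real.log (∑ s', Plik s' o * Pprior s'))
      - (∑ o, (∑ s, Plik s o * Qs s) *
          ∑ s, (Plik s o * Qs s / (∑ s', Plik s' o * Qs s')) *
            Real.log ((Plik s o * Qs s / (∑ s', Plik s' o * Qs s')) / Qs s))
      = ∑ o, ∑ s, Plik s o * Qs s *
          (Real.log (Qs s) - Real.log (Plik s o) - Real.log (Pprior s)) := by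
    rw [← Finset.sum_sub_distrib, ← Finset.sum_sub_distrib]
    refine Finset.sum_congr rfl fun o _ => ?_
    have hmid : (∑ s, Plik s o * Qs s) * Real.log (∑ s', Plik s' o * Pprior s')
        = ∑ s, Plik s o * Qs s * Real.log (∑ s', Plik s' o * Pprior s') :=
      Finset.sum_mul _ _ _
    rw [Finset.mul_sum, Finset.mul_sum, hmid,
      ← Finset.sum_sub_distrib, ← Finset.sum_sub_distrib]
    refine Finset.sum_congr rfl fun s _ => ?_
    have hc : ∀ L : ℝ, (∑ s', Plik s' o * Qs s') *
        (Plik s o * Qs s / (∑ s', Plik s' o * Qs s') * L) = Plik s o * Qs s * L := by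
      intro L
      rw [show (∑ s', Plik s' o * Qs s') *
          (Plik s o * Qs s / (∑ s', Plik s' o * Qs s') * L)
          = Plik s o * Qs s / (∑ s', Plik s' o * Qs s') * (∑ s', Plik s' o * Qs s') * L
          by ring, div_mul_cancel₀ _ (hQo o).ne']
    rw [hc, hc, key o s]
  rw [lhs_eq, rhs_eq, Finset.sum_comm]
end

section
/- Steady-state lemma: For the Gibbs energy G(π;β) := D_KL[Q(s,A|π)||P(s,A)] - β E_{Q(o,s,A|π)}[log P(o|s,A)] with β := E_Q[log Q(π|s,A)]/E_Q[log P(o|s,A)], the equality E_Q[-log Q(π)] = E_Q[G(π;β)] holds if and only if D_KL[Q(s,A)||P(s,A)] = 0. -/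
open BigOperators Finset

private lemma step_split {ι : Type*} [Fintype ι] (w A L : ι → ℝ) (N D : ℝ) (hD : D ≠ 0)
    (hDL : ∑ i, w i * L i = D) :
    ∑ i, w i * (A i - N / D * L i) = (∑ i, w i * A i) - N := by
  have h : ∀ i ∈ (Finset.univ : Finset ι),
      w i * (A i - N / D * L i) = w i * A i - N / D * (w i * L i) := fun i _ => by ring
  rw [Finset.sum_congr rfl h, Finset.sum_sub_distrib, ← Finset.mul_sum, hDL,
    div_mul_cancel₀ _ hD]

/-- Steady-state lemma. With `Q(o,s,A,π) = P(o|s,A) Q(s,A|π) Q(π)`, Gibbs energy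
`G(π;β) = D_KL[Q(s,A|π)‖P(s,A)] - β E_{Q(o,s,A|π)}[log P(o|s,A)]` and
`β = E_Q[log Q(π|s,A)] / E_Q[log P(o|s,A)]`, the surprisal over policies and the
Gibbs energy are equal on average under `Q` iff the system reaches steady state:
`E_Q[-log Q(π)] = E_Q[G(π;β)] ↔ D_KL[Q(s,A)‖P(s,A)] = 0`. -/
theorem steady_state_lemma
    {Pol St Par Obs : Type*} [Fintype Pol] [Fintype St] [Fintype Par] [Fintype Obs]
    (Qpi : Pol → ℝ) (Qcond : Pol → St → Par → ℝ)
    (Plik : St → Par → Obs → ℝ) (Ptar : St → Par → ℝ)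
    (hQpi : ∀ π, 0 < Qpi π) (hQcond : ∀ π s a, 0 < Qcond π s a)
    (hPlik : ∀ s a o, 0 < Plik s a o) (hPtar : ∀ s a, 0 < Ptar s a)
    (hQpi1 : ∑ π, Qpi π = 1) (hQcond1 : ∀ π, ∑ s, ∑ a, Qcond π s a = 1)
    (hPlik1 : ∀ s a, ∑ o, Plik s a o = 1) (hPtar1 : ∑ s, ∑ a, Ptar s a = 1)
    (hden : (∑ π, ∑ s, ∑ a, ∑ o, Qpi π * Qcond π s a * Plik s a o * Real.log (Plik s a o)) ≠ 0) :
    -- E_Q[-log Q(π)] = E_Q[G(π;β)]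
    ((∑ π, Qpi π * (-Real.log (Qpi π)))
      = ∑ π, Qpi π *
          ((∑ s, ∑ a, Qcond π s a * Real.log (Qcond π s a / Ptar s a))
            - ((∑ π', ∑ s, ∑ a, Qpi π' * Qcond π' s a *
                  Real.log (Qcond π' s a * Qpi π' / (∑ π'', Qcond π'' s a * Qpi π''))) /
               (∑ π', ∑ s, ∑ a, ∑ o, Qpi π' * Qcond π' s a * Plik s a o *
                  Real.log (Plik s a o)))
              * (∑ s, ∑ a, ∑ o, Qcond π s a * Plik s a o * Real.log (Plik s a o))))
    ↔
    (∑ s, ∑ a, (∑ π, Qcond π s a * Qpi π) *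
        Real.log ((∑ π, Qcond π s a * Qpi π) / Ptar s a)) = 0 := by
  classical
  have hne : (Finset.univ : Finset Pol).Nonempty := by
    by_contra h
    rw [Finset.not_nonempty_iff_eq_empty] at h
    rw [h, Finset.sum_empty] at hQpi1
    norm_num at hQpi1
  have hQsa : ∀ s a, 0 < ∑ π, Qcond π s a * Qpi π := fun s a =>
    Finset.sum_pos (fun π _ => mul_pos (hQcond π s a) (hQpi π)) hne
  -- abbreviations
  have hDL : (∑ π, Qpi π *
        (∑ s, ∑ a, ∑ o, Qcond π s a * Plik s a o * Real.log (Plik s a o)))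
      = ∑ π, ∑ s, ∑ a, ∑ o, Qpi π * Qcond π s a * Plik s a o * Real.log (Plik s a o) := by
    simp only [Finset.mul_sum, mul_assoc]
  have step1 := step_split Qpi
    (fun π => ∑ s, ∑ a, Qcond π s a * Real.log (Qcond π s a / Ptar s a))
    (fun π => ∑ s, ∑ a, ∑ o, Qcond π s a * Plik s a o * Real.log (Plik s a o))
    (∑ π', ∑ s, ∑ a, Qpi π' * Qcond π' s a *
        Real.log (Qcond π' s a * Qpi π' / (∑ π'', Qcond π'' s a * Qpi π'')))
    (∑ π', ∑ s, ∑ a, ∑ o, Qpi π' * Qcond π' s a * Plik s a o * Real.log (Plik s a o))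
    hden hDL
  have h1 : (∑ π, Qpi π * (∑ s, ∑ a, Qcond π s a * Real.log (Qcond π s a / Ptar s a)))
      = ∑ π, ∑ s, ∑ a, Qpi π * Qcond π s a *
          (Real.log (Qcond π s a) - Real.log (Ptar s a)) := by
    refine Finset.sum_congr rfl fun π _ => ?_
    rw [Finset.mul_sum]
    refine Finset.sum_congr rfl fun s _ => ?_
    rw [Finset.mul_sum]
    refine Finset.sum_congr rfl fun a _ => ?_
    rw [Real.log_div (hQcond π s a).ne' (hPtar s a).ne']
    ring
  have h2 : (∑ π', ∑ s, ∑ a, Qpi π' * Qcond π' s a *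
        Real.log (Qcond π' s a * Qpi π' / (∑ π'', Qcond π'' s a * Qpi π'')))
      = ∑ π, ∑ s, ∑ a, Qpi π * Qcond π s a *
          (Real.log (Qcond π s a) + Real.log (Qpi π)
            - Real.log (∑ π'', Qcond π'' s a * Qpi π'')) := by
    refine Finset.sum_congr rfl fun π _ => Finset.sum_congr rfl fun s _ =>
      Finset.sum_congr rfl fun a _ => ?_
    rw [Real.log_div (mul_pos (hQcond π s a) (hQpi π)).ne' (hQsa s a).ne',
      Real.log_mul (hQcond π s a).ne' (hQpi π).ne']
  have h4 : (∑ π, ∑ s, ∑ a, Qpi π * Qcond π s a * Real.log (Qpi π))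
      = ∑ π, Qpi π * Real.log (Qpi π) := by
    refine Finset.sum_congr rfl fun π _ => ?_
    have e : (∑ s, ∑ a, Qpi π * Qcond π s a * Real.log (Qpi π))
        = (Qpi π * Real.log (Qpi π)) * ∑ s, ∑ a, Qcond π s a := by
      rw [Finset.mul_sum]
      refine Finset.sum_congr rfl fun s _ => ?_
      rw [Finset.mul_sum]
      exact Finset.sum_congr rfl fun a _ => by ring
    rw [e, hQcond1, mul_one]
  have h5 : (∑ π, ∑ s, ∑ a, Qpi π * Qcond π s a *
        (Real.log (∑ π'', Qcond π'' s a * Qpi π'') - Real.log (Ptar s a)))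
      = ∑ s, ∑ a, (∑ π, Qcond π s a * Qpi π) *
          Real.log ((∑ π, Qcond π s a * Qpi π) / Ptar s a) := by
    rw [Finset.sum_comm]
    refine Finset.sum_congr rfl fun s _ => ?_
    rw [Finset.sum_comm]
    refine Finset.sum_congr rfl fun a _ => ?_
    rw [Real.log_div (hQsa s a).ne' (hPtar s a).ne', Finset.sum_mul]
    exact Finset.sum_congr rfl fun π _ => by ring
  have h3 : (∑ π, ∑ s, ∑ a, Qpi π * Qcond π s a *
          (Real.log (Qcond π s a) - Real.log (Ptar s a)))
      - (∑ π, ∑ s, ∑ a, Qpi π * Qcond π s a *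
          (Real.log (Qcond π s a) + Real.log (Qpi π)
            - Real.log (∑ π'', Qcond π'' s a * Qpi π'')))
      = (∑ π, ∑ s, ∑ a, Qpi π * Qcond π s a *
          (Real.log (∑ π'', Qcond π'' s a * Qpi π'') - Real.log (Ptar s a)))
        - (∑ π, ∑ s, ∑ a, Qpi π * Qcond π s a * Real.log (Qpi π)) := by
    rw [← Finset.sum_sub_distrib, ← Finset.sum_sub_distrib]
    refine Finset.sum_congr rfl fun π _ => ?_
    rw [← Finset.sum_sub_distrib, ← Finset.sum_sub_distrib]
    refine Finset.sum_congr rfl fun s _ => ?_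
    rw [← Finset.sum_sub_distrib, ← Finset.sum_sub_distrib]
    exact Finset.sum_congr rfl fun a _ => by ring
  have key : (∑ π, Qpi π *
          ((∑ s, ∑ a, Qcond π s a * Real.log (Qcond π s a / Ptar s a))
            - ((∑ π', ∑ s, ∑ a, Qpi π' * Qcond π' s a *
                  Real.log (Qcond π' s a * Qpi π' / (∑ π'', Qcond π'' s a * Qpi π''))) /
               (∑ π', ∑ s, ∑ a, ∑ o, Qpi π' * Qcond π' s a * Plik s a o *
                  Real.log (Plik s a o)))
              * (∑ s, ∑ a, ∑ o, Qcond π s a * Plik s a o * Real.log (Plik s a o))))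
      = (∑ π, Qpi π * (-Real.log (Qpi π)))
        + ∑ s, ∑ a, (∑ π, Qcond π s a * Qpi π) *
            Real.log ((∑ π, Qcond π s a * Qpi π) / Ptar s a) := by
    rw [step1, h1, h2, h3, h4, h5]
    have : (∑ π, Qpi π * (-Real.log (Qpi π))) = -∑ π, Qpi π * Real.log (Qpi π) := by
      rw [← Finset.sum_neg_distrib]
      exact Finset.sum_congr rfl fun π _ => by ring
    rw [this]
    ring
  constructor
  · intro h
    rw [key] at h
    linarith
  · intro h
    rw [key, h, add_zero]
end
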